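/- The sum ∑_{j=0}^{k-1} 1/(1 - q^{j-k}) is bounded above by k + q^{-1}/(1-q^{-1}) + log_q((1 - q^{-k})/(1 - q^{-1})). -/

import Mathlib

private lemma key_aux (q a : ℝ) (hq : 1 < q) (ha : 0 < a) (hqa : q * a < 1) :
    (1 - a)⁻¹ ≤ 1 + Real.logb q ((1 - a) / (1 - q * a)) := by
  have ha1 : a < 1 := by nlinarith
  have h1a : (0:ℝ) < 1 - a := by linarith
  have h1qa : (0:ℝ) < 1 - q * a := by linarith
  have hlogq : 0 < Real.log q := Real.log_pos hq
  have hinv : Real.log ((1 - q*a)/(1 - a)) ≤ (1 - q*a)/(1 - a) - 1 :=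
    Real.log_le_sub_one_of_pos (div_pos h1qa h1a)
  have hlogx : a * (q - 1) / (1 - a) ≤ Real.log ((1 - a) / (1 - q * a)) := by
    rw [Real.log_div h1a.ne' h1qa.ne']
    rw [Real.log_div h1qa.ne' h1a.ne'] at hinv
    have h2 : (1 - q*a)/(1-a) - 1 = -(a*(q-1)/(1-a)) := by field_simp; ring
    rw [h2] at hinv
    linarith
  have hfrac : a / (1 - a) * Real.log q ≤ Real.log ((1-a)/(1-q*a)) := by
    have hlq : Real.log q ≤ q - 1 := by
      have := Real.log_le_sub_one_of_pos (show (0:ℝ) < q by linarith)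
      linarith
    have h0 : 0 ≤ a / (1 - a) := by positivity
    calc a / (1-a) * Real.log q ≤ a/(1-a) * (q-1) := by nlinarith
    _ = a * (q-1)/(1-a) := by ring
    _ ≤ _ := hlogx
  have hmain : a / (1 - a) ≤ Real.logb q ((1-a)/(1-q*a)) := by
    rw [Real.logb, le_div_iff₀ hlogq]
    exact hfrac
  have heq : (1 - a)⁻¹ = 1 + a / (1 - a) := by field_simp; ring
  linarith

/-- For real `q > 1` and `k ≥ 1`,
`∑_{j=0}^{k-1} 1/(1 - q^{j-k}) ≤ k + q⁻¹/(1-q⁻¹) + log_q((1 - q^{-k})/(1 - q^{-1}))`. -/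
theorem stmt_10 (q : ℝ) (hq : 1 < q) (k : ℕ) (hk : 1 ≤ k) :
    ∑ j ∈ Finset.range k, (1 - q ^ ((j : ℝ) - (k : ℝ)))⁻¹
      ≤ (k : ℝ) + q⁻¹ / (1 - q⁻¹)
        + Real.logb q ((1 - q ^ (-(k : ℝ))) / (1 - q ^ (-(1 : ℝ)))) := by
  have hq0 : (0:ℝ) < q := by linarith
  have hqinv : q⁻¹ < 1 := by
    rw [inv_lt_one_iff₀]; right; exact hq
  have h1qinv : (0:ℝ) < 1 - q⁻¹ := by linarith
  have hr1 : q ^ (-(1:ℝ)) = q⁻¹ := Real.rpow_neg_one q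
  induction k, hk using Nat.le_induction with
  | base =>
    rw [Finset.sum_range_one]
    have e1 : ((0:ℕ):ℝ) - ((1:ℕ):ℝ) = -(1:ℝ) := by norm_num
    have e2 : (-(((1:ℕ)):ℝ)) = -(1:ℝ) := by norm_num
    rw [e1, e2, hr1, div_self h1qinv.ne', Real.logb_one]
    have hmul : (1 + q⁻¹ / (1 - q⁻¹)) * (1 - q⁻¹) = 1 := by
      have h : q - 1 ≠ 0 := sub_ne_zero.mpr hq.ne'
      field_simp
      ring
    have heq : (1 - q⁻¹)⁻¹ = 1 + q⁻¹ / (1 - q⁻¹) := inv_eq_of_mul_eq_one_left hmul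
    rw [heq]
    norm_num
  | succ n hn ih =>
    have hposA : (0:ℝ) < 1 - q ^ (-(n:ℝ)) := by
      have : q ^ (-(n:ℝ)) < 1 := by
        apply Real.rpow_lt_one_of_one_lt_of_neg hq
        have : (0:ℝ) < (n:ℝ) := by exact_mod_cast hn
        linarith
      linarith
    have hposC : (0:ℝ) < 1 - q ^ (-((n:ℝ)+1)) := by
      have : q ^ (-((n:ℝ)+1)) < 1 := by
        apply Real.rpow_lt_one_of_one_lt_of_neg hq
        have : (0:ℝ) ≤ (n:ℝ) := Nat.cast_nonneg n
        linarith
      linarith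
    have hapos : (0:ℝ) < q ^ (-((n:ℝ)+1)) := Real.rpow_pos_of_pos hq0 _
    have hqa : q * q ^ (-((n:ℝ)+1)) = q ^ (-(n:ℝ)) := by
      rw [show -(n:ℝ) = (1:ℝ) + (-((n:ℝ)+1)) by ring, Real.rpow_add hq0, Real.rpow_one]
    -- split off the first term of the sum
    rw [Finset.sum_range_succ']
    have hsum : ∀ j ∈ Finset.range n,
        (1 - q ^ (((j+1:ℕ):ℝ) - ((n+1:ℕ):ℝ)))⁻¹ = (1 - q ^ ((j:ℝ) - (n:ℝ)))⁻¹ := by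
      intro j _
      congr 2
      push_cast
      ring
    rw [Finset.sum_congr rfl hsum]
    have e0 : ((0:ℕ):ℝ) - ((n+1:ℕ):ℝ) = -((n:ℝ)+1) := by push_cast; ring
    rw [e0]
    have hkey : (1 - q ^ (-((n:ℝ)+1)))⁻¹
        ≤ 1 + Real.logb q ((1 - q ^ (-((n:ℝ)+1))) / (1 - q ^ (-(n:ℝ)))) := by
      have := key_aux q (q ^ (-((n:ℝ)+1))) hq hapos (by rw [hqa]; linarith)
      rwa [hqa] at this
    have hposB : (0:ℝ) < 1 - q ^ (-(1:ℝ)) := by rw [hr1]; exact h1qinv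
    have hlogsum : Real.logb q ((1 - q ^ (-(n:ℝ))) / (1 - q ^ (-(1:ℝ))))
        + Real.logb q ((1 - q ^ (-((n:ℝ)+1))) / (1 - q ^ (-(n:ℝ))))
        = Real.logb q ((1 - q ^ (-((n:ℝ)+1))) / (1 - q ^ (-(1:ℝ)))) := by
      rw [Real.logb, Real.logb, Real.logb, Real.log_div hposA.ne' hposB.ne',
        Real.log_div hposC.ne' hposA.ne', Real.log_div hposC.ne' hposB.ne']
      ring
    have ecast : -(((n+1:ℕ)):ℝ) = -((n:ℝ)+1) := by push_cast; ring
    rw [ecast]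
    push_cast
    calc ∑ j ∈ Finset.range n, (1 - q ^ ((j:ℝ) - (n:ℝ)))⁻¹ + (1 - q ^ (-((n:ℝ)+1)))⁻¹
        ≤ ((n:ℝ) + q⁻¹ / (1 - q⁻¹) + Real.logb q ((1 - q ^ (-(n:ℝ))) / (1 - q ^ (-(1:ℝ)))))
          + (1 + Real.logb q ((1 - q ^ (-((n:ℝ)+1))) / (1 - q ^ (-(n:ℝ))))) :=
          add_le_add ih hkey
      _ = (n:ℝ) + 1 + q⁻¹ / (1 - q⁻¹)
          + Real.logb q ((1 - q ^ (-((n:ℝ)+1))) / (1 - q ^ (-(1:ℝ)))) := by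
          rw [← hlogsum]; ring
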